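/- arXiv:1910.05532 — 4 statements merged into one kernel-verified Lean document; each statement's English description precedes it below -/
import Mathlib

section
/- The set S = \{\alpha \in \Delta_0^+ : \alpha + \sigma(\alpha) \in \mathbb{Z}_{>0}\cdot\delta\} has exactly n elements; moreover every \alpha \in S satisfies \alpha + \sigma(\alpha) = \delta, and B(\alpha, \alpha') = 0 for all distinct \alpha, \alpha' \in S. In particular, S is the positive system of a subsystem of \Delta_0 consisting of n pairwise orthogonal roots (type nA_1). -/
/-!
Statement 1: For the affine root system of type `D_{2n}^{(1)}` (`n ≥ 2`) with the
admissible diagram automorphism `σ : α_i ↦ α_{2n-i}`, the set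
`S = {α ∈ Δ₀⁺ : α + σ(α) ∈ ℤ_{>0}·δ}` has exactly `n` elements, every `α ∈ S`
satisfies `α + σ(α) = δ`, and distinct elements of `S` are orthogonal (type `nA₁`).
-/

namespace Stmt1

/-- The root lattice `Q = ⨁_{i ∈ I} ℤ α_i` for `I = {0,1,…,2n}`. -/
abbrev Q (n : ℕ) := Fin (2 * n + 1) → ℤ

/-- The edges of the Dynkin diagram of affine type `D_{2n}^{(1)}`:
`{0,2}`, `{1,2}`, `{k,k+1}` for `2 ≤ k ≤ 2n-2`, and `{2n-2, 2n}`. -/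
abbrev edge (n i j : ℕ) : Prop :=
  (i + 1 = j ∧ 2 ≤ i ∧ j ≤ 2 * n - 1) ∨ (j + 1 = i ∧ 2 ≤ j ∧ i ≤ 2 * n - 1) ∨
  (i = 0 ∧ j = 2) ∨ (i = 2 ∧ j = 0) ∨ (i = 1 ∧ j = 2) ∨ (i = 2 ∧ j = 1) ∨
  (i = 2 * n - 2 ∧ j = 2 * n) ∨ (i = 2 * n ∧ j = 2 * n - 2)

/-- The generalized Cartan matrix of type `D_{2n}^{(1)}`. -/
def CM (n : ℕ) (i j : Fin (2 * n + 1)) : ℤ :=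
  if i = j then 2 else if edge n (i : ℕ) (j : ℕ) then -1 else 0

/-- The symmetric bilinear form `B` on `Q` determined by the Cartan matrix. -/
def B (n : ℕ) (v w : Q n) : ℤ := ∑ i, ∑ j, v i * CM n i j * w j

/-- The set of positive real roots. -/
def ΔrePos (n : ℕ) : Set (Q n) := {v | (∀ i, 0 ≤ v i) ∧ B n v v = 2}

/-- The set `Δ₀⁺` of positive roots of the finite root system of type `D_{2n}`. -/
def Δ0Pos (n : ℕ) : Set (Q n) := {v | v ∈ ΔrePos n ∧ v 0 = 0}

/-- The primitive null root
`δ = α_0 + α_1 + 2(α_2 + ⋯ + α_{2n-2}) + α_{2n-1} + α_{2n}`. -/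
def δ (n : ℕ) : Q n := fun i =>
  if (i : ℕ) = 0 ∨ (i : ℕ) = 1 ∨ (i : ℕ) = 2 * n - 1 ∨ (i : ℕ) = 2 * n then 1 else 2

/-- The admissible diagram automorphism `σ : α_i ↦ α_{2n-i}` (on coordinates). -/
def σmap (n : ℕ) (v : Q n) : Q n := fun i => v ⟨2 * n - (i : ℕ), by omega⟩

/-- `S = {α ∈ Δ₀⁺ : α + σ(α) ∈ ℤ_{>0}·δ}`. -/
def S (n : ℕ) : Set (Q n) :=
  {α | α ∈ Δ0Pos n ∧ ∃ m : ℤ, 0 < m ∧ α + σmap n α = m • δ n}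

set_option maxHeartbeats 1600000

-- ### auxiliary definitions
def CMn (n i j : ℕ) : ℤ := if i = j then 2 else if edge n i j then -1 else 0

def cv (n : ℕ) (v : Q n) (t : ℕ) : ℤ := if h : t < 2*n+1 then v ⟨t, h⟩ else 0

def A (n t i : ℕ) : ℤ :=
  if i = t then 1
  else if i + 1 = t then -1
  else if t = 2*n-1 ∧ i = 2*n then 1
  else if t = 2 ∧ i = 0 then -1
  else 0

def X (n : ℕ) (v : Q n) (t : ℕ) : ℤ := ∑ i ∈ Finset.range (2*n+1), A n t i * cv n v i

lemma sum_supp2 {s : Finset ℕ} {a b : ℕ} (hab : a ≠ b) (ha : a ∈ s) (hb : b ∈ s)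
    (g : ℕ → ℤ) (h0 : ∀ j ∈ s, j ≠ a → j ≠ b → g j = 0) :
    ∑ j ∈ s, g j = g a + g b := by
  have hsub : ({a, b} : Finset ℕ) ⊆ s := by
    intro x hx
    simp only [Finset.mem_insert, Finset.mem_singleton] at hx
    rcases hx with h | h <;> subst h <;> assumption
  rw [← Finset.sum_subset hsub, Finset.sum_pair hab]
  intro x hx hnx
  simp only [Finset.mem_insert, Finset.mem_singleton, not_or] at hnx
  exact h0 x hx hnx.1 hnx.2

lemma sum_supp3 {s : Finset ℕ} {a b c : ℕ} (hab : a ≠ b) (hac : a ≠ c) (hbc : b ≠ c)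
    (ha : a ∈ s) (hb : b ∈ s) (hc : c ∈ s)
    (g : ℕ → ℤ) (h0 : ∀ j ∈ s, j ≠ a → j ≠ b → j ≠ c → g j = 0) :
    ∑ j ∈ s, g j = g a + g b + g c := by
  have hsub : ({a, b, c} : Finset ℕ) ⊆ s := by
    intro x hx
    simp only [Finset.mem_insert, Finset.mem_singleton] at hx
    rcases hx with h | h | h <;> subst h <;> assumption
  rw [← Finset.sum_subset hsub]
  · rw [Finset.sum_insert (by simp [hab, hac]), Finset.sum_pair hbc, add_assoc]
  · intro x hx hnx
    simp only [Finset.mem_insert, Finset.mem_singleton, not_or] at hnx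
    exact h0 x hx hnx.1 hnx.2.1 hnx.2.2



lemma CMkey_aux (n : ℕ) (i j a : ℕ) (ha1 : 1 ≤ a) (ha2 : a + 1 ≤ 2*n)
    (hsupp : ∀ t, 1 ≤ t → t ≤ 2*n → t ≠ a → t ≠ a + 1 → A n t i = 0) :
    ∑ t ∈ Finset.Icc 1 (2*n), A n t i * A n t j
      = A n a i * A n a j + A n (a+1) i * A n (a+1) j := by
  apply sum_supp2 (by omega) (by simp only [Finset.mem_Icc]; omega)
    (by simp only [Finset.mem_Icc]; omega)
  intro t hts hta htb
  simp only [Finset.mem_Icc] at hts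
  rw [hsupp t hts.1 hts.2 hta htb]
  ring

lemma Aval_self (n i : ℕ) : A n i i = 1 := by
  unfold A; rw [if_pos rfl]

lemma Aval_succ (n i : ℕ) : A n (i+1) i = -1 := by
  unfold A; rw [if_neg (by omega), if_pos rfl]

lemma Aval_10 (n : ℕ) (hn : 2 ≤ n) : A n 1 0 = -1 := by
  unfold A; split_ifs <;> first | omega | tauto

lemma Aval_20 (n : ℕ) (hn : 2 ≤ n) : A n 2 0 = -1 := by
  unfold A; split_ifs <;> first | omega | tauto

lemma Aval_hi (n : ℕ) (hn : 2 ≤ n) : A n (2*n-1) (2*n) = 1 := by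
  unfold A; split_ifs <;> first | omega | tauto

lemma CMkey (n : ℕ) (hn : 2 ≤ n) (i j : ℕ) (hi : i ≤ 2*n) (hj : j ≤ 2*n) :
    ∑ t ∈ Finset.Icc 1 (2*n), A n t i * A n t j = CMn n i j := by
  rcases (by omega : i = 0 ∨ i = 2*n ∨ (1 ≤ i ∧ i ≤ 2*n - 1)) with hi' | hi' | hi'
  · subst hi'
    rw [CMkey_aux n 0 j 1 (by omega) (by omega)
      (by intro t ht1 ht2 hta htb; unfold A; split_ifs <;> first | omega | tauto)]
    rw [Aval_10 n hn]
    have h2 : (1:ℕ) + 1 = 2 := rfl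
    rw [h2, Aval_20 n hn]
    unfold A CMn; split_ifs <;> first | omega | tauto
  · subst hi'
    rw [CMkey_aux n (2*n) j (2*n-1) (by omega) (by omega)
      (by intro t ht1 ht2 hta htb; unfold A; split_ifs <;> first | omega | tauto)]
    have h2 : 2*n - 1 + 1 = 2*n := by omega
    rw [Aval_hi n hn, h2, Aval_self]
    unfold A CMn; split_ifs <;> first | omega | tauto
  · rw [CMkey_aux n i j i hi'.1 (by omega)
      (by intro t ht1 ht2 hta htb; unfold A; split_ifs <;> first | omega | tauto)]
    rw [Aval_self, Aval_succ]
    unfold A CMn; split_ifs <;> first | omega | tauto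


lemma cv_fin (n : ℕ) (v : Q n) (i : Fin (2*n+1)) : cv n v ↑i = v i := by
  unfold cv
  rw [dif_pos i.isLt]

lemma Bform (n : ℕ) (hn : 2 ≤ n) (v w : Q n) :
    B n v w = ∑ t ∈ Finset.Icc 1 (2*n), X n v t * X n w t := by
  have lhs : B n v w = ∑ i ∈ Finset.range (2*n+1), ∑ j ∈ Finset.range (2*n+1),
      cv n v i * CMn n i j * cv n w j := by
    unfold B
    rw [← Fin.sum_univ_eq_sum_range
      (fun i => ∑ j ∈ Finset.range (2*n+1), cv n v i * CMn n i j * cv n w j)]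
    apply Finset.sum_congr rfl
    intro i _
    rw [← Fin.sum_univ_eq_sum_range (fun j => cv n v ↑i * CMn n ↑i j * cv n w j)]
    apply Finset.sum_congr rfl
    intro j _
    rw [cv_fin, cv_fin]
    congr 1
    unfold CM CMn
    congr 1
    simp [Fin.ext_iff]
  rw [lhs]
  symm
  calc ∑ t ∈ Finset.Icc 1 (2*n), X n v t * X n w t
      = ∑ t ∈ Finset.Icc 1 (2*n), ∑ i ∈ Finset.range (2*n+1), ∑ j ∈ Finset.range (2*n+1),
          (A n t i * cv n v i) * (A n t j * cv n w j) := by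
        apply Finset.sum_congr rfl
        intro t _
        unfold X
        rw [Finset.sum_mul_sum]
    _ = ∑ i ∈ Finset.range (2*n+1), ∑ j ∈ Finset.range (2*n+1), ∑ t ∈ Finset.Icc 1 (2*n),
          (A n t i * cv n v i) * (A n t j * cv n w j) := by
        rw [Finset.sum_comm]
        apply Finset.sum_congr rfl
        intro i _
        rw [Finset.sum_comm]
    _ = ∑ i ∈ Finset.range (2*n+1), ∑ j ∈ Finset.range (2*n+1),
          cv n v i * CMn n i j * cv n w j := by
        apply Finset.sum_congr rfl
        intro i hi
        apply Finset.sum_congr rfl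
        intro j hj
        have h1 : ∑ t ∈ Finset.Icc 1 (2*n), (A n t i * cv n v i) * (A n t j * cv n w j)
            = (∑ t ∈ Finset.Icc 1 (2*n), A n t i * A n t j) * (cv n v i * cv n w j) := by
          rw [Finset.sum_mul]
          apply Finset.sum_congr rfl
          intro t _
          ring
        rw [h1, CMkey n hn i j (by have := Finset.mem_range.mp hi; omega)
          (by have := Finset.mem_range.mp hj; omega)]
        ring


lemma Xeval (n : ℕ) (hn : 2 ≤ n) (v : Q n) (t : ℕ) (ht1 : 1 ≤ t) (ht2 : t ≤ 2*n) :
    X n v t =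
      if t = 2*n - 1 then cv n v (2*n-1) + cv n v (2*n) - cv n v (2*n-2)
      else if t = 2*n then cv n v (2*n) - cv n v (2*n-1)
      else if t = 2 then cv n v 2 - cv n v 1 - cv n v 0
      else cv n v t - cv n v (t-1) := by
  unfold X
  rcases (by omega : t = 2*n-1 ∨ t = 2*n ∨ t = 2 ∨ (1 ≤ t ∧ t ≤ 2*n-2 ∧ t ≠ 2))
    with ht | ht | ht | ht
  · subst ht
    rw [if_pos rfl]
    rw [sum_supp3 (a := 2*n-2) (b := 2*n-1) (c := 2*n) (by omega) (by omega) (by omega)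
      (by simp only [Finset.mem_range]; omega) (by simp only [Finset.mem_range]; omega)
      (by simp only [Finset.mem_range]; omega)
      _ (by
        intro j hj hja hjb hjc
        rw [show A n (2*n-1) j = 0 by unfold A; split_ifs <;> omega]
        ring)]
    rw [show A n (2*n-1) (2*n-2) = -1 by unfold A; split_ifs <;> omega,
      show A n (2*n-1) (2*n-1) = 1 by unfold A; split_ifs <;> omega,
      show A n (2*n-1) (2*n) = 1 by unfold A; split_ifs <;> omega]
    ring
  · subst ht
    rw [if_neg (by omega), if_pos rfl]
    rw [sum_supp2 (a := 2*n-1) (b := 2*n) (by omega)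
      (by simp only [Finset.mem_range]; omega) (by simp only [Finset.mem_range]; omega)
      _ (by
        intro j hj hja hjb
        rw [show A n (2*n) j = 0 by unfold A; split_ifs <;> omega]
        ring)]
    rw [show A n (2*n) (2*n-1) = -1 by unfold A; split_ifs <;> omega,
      show A n (2*n) (2*n) = 1 by unfold A; split_ifs <;> omega]
    ring
  · subst ht
    rw [if_neg (by omega), if_neg (by omega), if_pos rfl]
    rw [sum_supp3 (a := 0) (b := 1) (c := 2) (by omega) (by omega) (by omega)
      (by simp only [Finset.mem_range]; omega) (by simp only [Finset.mem_range]; omega)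
      (by simp only [Finset.mem_range]; omega)
      _ (by
        intro j hj hja hjb hjc
        rw [show A n 2 j = 0 by unfold A; split_ifs <;> omega]
        ring)]
    rw [show A n 2 0 = -1 by unfold A; split_ifs <;> first | omega | tauto,
      show A n 2 1 = -1 by unfold A; split_ifs <;> first | omega | tauto,
      show A n 2 2 = 1 by unfold A; split_ifs <;> first | omega | tauto]
    ring
  · rw [if_neg (by omega), if_neg (by omega), if_neg (by omega)]
    rw [sum_supp2 (a := t-1) (b := t) (by omega)
      (by simp only [Finset.mem_range]; omega) (by simp only [Finset.mem_range]; omega)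
      _ (by
        intro j hj hja hjb
        rw [show A n t j = 0 by unfold A; split_ifs <;> omega]
        ring)]
    rw [show A n t (t-1) = -1 by unfold A; split_ifs <;> omega,
      show A n t t = 1 by unfold A; split_ifs <;> omega]
    ring


def βv (n k : ℕ) : Q n := fun i =>
  if (i : ℕ) = 0 then 0
  else if (i : ℕ) = 2*n then 1
  else if (i : ℕ) = 2*n-1 then (if k = 1 then 0 else 1)
  else if (i : ℕ) < k then 0
  else if (i : ℕ) ≤ 2*n-k then 1 else 2

lemma cvβ (n k t : ℕ) (ht : t ≤ 2*n) : cv n (βv n k) t =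
    (if t = 0 then 0
    else if t = 2*n then 1
    else if t = 2*n-1 then (if k = 1 then 0 else 1)
    else if t < k then 0
    else if t ≤ 2*n-k then 1 else 2) := by
  unfold cv βv
  rw [dif_pos (by omega : t < 2*n+1)]

set_option maxHeartbeats 4000000 in
lemma Xβ (n : ℕ) (hn : 2 ≤ n) (k : ℕ) (hk1 : 1 ≤ k) (hk2 : k ≤ n)
    (t : ℕ) (ht1 : 1 ≤ t) (ht2 : t ≤ 2*n) :
    X n (βv n k) t = if t = k ∨ t = 2*n+1-k then 1 else 0 := by
  rw [Xeval n hn _ t ht1 ht2,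
    cvβ n k (2*n-1) (by omega), cvβ n k (2*n) (by omega), cvβ n k (2*n-2) (by omega),
    cvβ n k 2 (by omega), cvβ n k 1 (by omega), cvβ n k 0 (by omega),
    cvβ n k t (by omega), cvβ n k (t-1) (by omega)]
  split_ifs <;> first | omega | contradiction

lemma Bββ (n : ℕ) (hn : 2 ≤ n) (k k' : ℕ) (hk1 : 1 ≤ k) (hk2 : k ≤ n)
    (hk1' : 1 ≤ k') (hk2' : k' ≤ n) :
    B n (βv n k) (βv n k') = if k = k' then 2 else 0 := by
  rw [Bform n hn]
  rw [Finset.sum_congr rfl (fun t ht => by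
    rw [Xβ n hn k hk1 hk2 t (Finset.mem_Icc.mp ht).1 (Finset.mem_Icc.mp ht).2,
      Xβ n hn k' hk1' hk2' t (Finset.mem_Icc.mp ht).1 (Finset.mem_Icc.mp ht).2])]
  by_cases hkk : k = k'
  · subst hkk
    rw [if_pos rfl]
    rw [sum_supp2 (a := k) (b := 2*n+1-k) (by omega)
      (Finset.mem_Icc.mpr (by omega)) (Finset.mem_Icc.mpr (by omega)) _
      (by intro j hj hja hjb; split_ifs <;> omega)]
    split_ifs <;> omega
  · rw [if_neg hkk]
    apply Finset.sum_eq_zero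
    intro t ht
    have := Finset.mem_Icc.mp ht
    split_ifs <;> omega

lemma βmem (n : ℕ) (hn : 2 ≤ n) (k : ℕ) (hk1 : 1 ≤ k) (hk2 : k ≤ n) :
    βv n k ∈ S n ∧ βv n k + σmap n (βv n k) = δ n := by
  have hsig : βv n k + σmap n (βv n k) = δ n := by
    funext i
    rcases i with ⟨t, hti⟩
    simp only [Pi.add_apply, σmap, βv, δ, Fin.val_mk]
    have ht : t ≤ 2*n := by omega
    split_ifs <;> omega
  refine ⟨⟨⟨⟨?_, ?_⟩, ?_⟩, 1, one_pos, ?_⟩, hsig⟩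
  · intro i
    simp only [βv]
    split_ifs <;> omega
  · rw [Bββ n hn k k hk1 hk2 hk1 hk2, if_pos rfl]
  · simp only [βv, Fin.val_zero]
    norm_num
  · rw [hsig, one_smul]


lemma sum_eq_one {s : Finset ℕ} {g : ℕ → ℤ} (h0 : ∀ j ∈ s, 0 ≤ g j)
    (h1 : ∑ j ∈ s, g j = 1) :
    ∃ k ∈ s, g k = 1 ∧ ∀ j ∈ s, j ≠ k → g j = 0 := by
  classical
  have hex : ∃ k ∈ s, 0 < g k := by
    by_contra hc
    push_neg at hc
    have : ∑ j ∈ s, g j ≤ 0 := Finset.sum_nonpos hc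
    omega
  obtain ⟨k, hks, hk⟩ := hex
  have herase : g k + ∑ j ∈ s.erase k, g j = 1 := by
    rw [Finset.add_sum_erase s g hks]; exact h1
  have hnn : 0 ≤ ∑ j ∈ s.erase k, g j :=
    Finset.sum_nonneg (fun j hj => h0 j (Finset.mem_of_mem_erase hj))
  have hzero : ∑ j ∈ s.erase k, g j = 0 := by omega
  refine ⟨k, hks, by omega, ?_⟩
  intro j hjs hjk
  have := (Finset.sum_eq_zero_iff_of_nonneg
    (fun j hj => h0 j (Finset.mem_of_mem_erase hj))).mp hzero j
    (Finset.mem_erase.mpr ⟨hjk, hjs⟩)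
  exact this

set_option maxHeartbeats 1600000 in
lemma Sclass (n : ℕ) (hn : 2 ≤ n) (α : Q n) (hα : α ∈ S n) :
    ∃ k, 1 ≤ k ∧ k ≤ n ∧ α = βv n k := by
  obtain ⟨⟨⟨hpos, hB⟩, h0⟩, m, hm, hsum⟩ := hα
  -- coordinate relations
  have crel : ∀ t, t ≤ 2*n → cv n α t + cv n α (2*n - t)
      = m * (if t = 0 ∨ t = 1 ∨ t = 2*n-1 ∨ t = 2*n then 1 else 2) := by
    intro t ht
    have h := congrFun hsum ⟨t, by omega⟩
    simp only [Pi.add_apply, Pi.smul_apply, smul_eq_mul, σmap, δ, Fin.val_mk] at h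
    unfold cv
    rw [dif_pos (by omega : t < 2*n+1), dif_pos (by omega : 2*n - t < 2*n+1)]
    exact h
  have e0 : cv n α 0 = 0 := by
    unfold cv; rw [dif_pos (by omega : (0:ℕ) < 2*n+1)]; exact h0
  have eN : cv n α (2*n) = m := by
    have h := crel 0 (by omega)
    rw [if_pos (by omega), show 2*n - 0 = 2*n from rfl] at h
    omega
  have e1 : cv n α 1 + cv n α (2*n-1) = m := by
    have h := crel 1 (by omega)
    rw [if_pos (by omega)] at h
    omega
  have emid : ∀ t, 2 ≤ t → t ≤ 2*n-2 → cv n α t + cv n α (2*n - t) = 2*m := by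
    intro t h2 h3
    have h := crel t (by omega)
    rw [if_neg (by omega)] at h
    omega
  -- symmetry of X
  have Xsym : ∀ t, 1 ≤ t → t ≤ n → X n α (2*n+1-t) = X n α t := by
    intro t h1t htn
    rw [Xeval n hn α t (by omega) (by omega),
      Xeval n hn α (2*n+1-t) (by omega) (by omega)]
    rcases (by omega : t = 1 ∨ t = 2 ∨ (3 ≤ t ∧ t ≤ n)) with ht | ht | ht
    · subst ht
      simp only [show (1:ℕ)-1 = 0 from rfl]
      split_ifs <;> omega
    · subst ht
      have h2 := emid 2 (by omega) (by omega)
      split_ifs <;> omega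
    · have hA : cv n α (2*n+1-t) = 2*m - cv n α (t-1) := by
        have h := emid (t-1) (by omega) (by omega)
        rw [show 2*n - (t-1) = 2*n+1-t by omega] at h
        omega
      have hB' : cv n α (2*n+1-t-1) = 2*m - cv n α t := by
        have h := emid t (by omega) (by omega)
        rw [show 2*n - t = 2*n+1-t-1 by omega] at h
        omega
      split_ifs <;> omega
  -- the sum of squares equals 2
  have hBx : ∑ t ∈ Finset.Icc 1 (2*n), X n α t * X n α t = 2 := by
    rw [← Bform n hn]; exact hB
  have hsplit : ∑ t ∈ Finset.Ioc 0 n, X n α t * X n α t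
      + ∑ t ∈ Finset.Ioc n (2*n), X n α t * X n α t = 2 := by
    rw [Finset.sum_Ioc_consecutive _ (by omega : 0 ≤ n) (by omega : n ≤ 2*n),
      show Finset.Ioc 0 (2*n) = Finset.Icc 1 (2*n) from (Finset.Icc_add_one_left_eq_Ioc 0 (2*n)).symm]
    exact hBx
  have hrefl : ∑ t ∈ Finset.Ioc n (2*n), X n α t * X n α t
      = ∑ t ∈ Finset.Ioc 0 n, X n α t * X n α t := by
    apply Finset.sum_nbij' (i := fun t => 2*n+1-t) (j := fun t => 2*n+1-t)
    · intro a ha; simp only [Finset.mem_Ioc] at *; omega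
    · intro a ha; simp only [Finset.mem_Ioc] at *; omega
    · intro a ha; simp only [Finset.mem_Ioc] at ha; omega
    · intro a ha; simp only [Finset.mem_Ioc] at ha; omega
    · intro a ha
      simp only [Finset.mem_Ioc] at ha
      have h := Xsym (2*n+1-a) (by omega) (by omega)
      rw [show 2*n+1-(2*n+1-a) = a by omega] at h
      rw [h]
  have hone : ∑ t ∈ Finset.Ioc 0 n, X n α t * X n α t = 1 := by omega
  obtain ⟨k, hks, hk1, hkzero⟩ := sum_eq_one
    (fun j _ => mul_self_nonneg (X n α j)) hone
  simp only [Finset.mem_Ioc] at hks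
  -- telescoping
  have tel : ∀ j, 1 ≤ j → j ≤ 2*n-2 → (∑ t ∈ Finset.Icc 1 j, X n α t) = cv n α j := by
    intro j hj
    induction j, hj using Nat.le_induction with
    | base =>
      intro _
      rw [Finset.Icc_self, Finset.sum_singleton,
        Xeval n hn α 1 (by omega) (by omega),
        if_neg (by omega), if_neg (by omega), if_neg (by omega),
        show (1:ℕ)-1 = 0 from rfl]
      omega
    | succ j hj ih =>
      intro hj2
      rw [Finset.sum_Icc_succ_top (by omega : 1 ≤ j+1), ih (by omega)]
      rcases (by omega : j = 1 ∨ 2 ≤ j) with h1 | h1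
      · subst h1
        rw [show (1:ℕ)+1 = 2 from rfl, Xeval n hn α 2 (by omega) (by omega),
          if_neg (by omega), if_neg (by omega), if_pos rfl]
        omega
      · rw [Xeval n hn α (j+1) (by omega) (by omega),
          if_neg (by omega), if_neg (by omega), if_neg (by omega),
          show j+1-1 = j from rfl]
        ring
  have ean : cv n α n = m := by
    have h := emid n (by omega) (by omega)
    rw [show 2*n - n = n by omega] at h
    omega
  have hsumX : ∑ t ∈ Finset.Icc 1 n, X n α t = m := by
    rw [tel n (by omega) (by omega)]; exact ean
  have hXk : ∑ t ∈ Finset.Icc 1 n, X n α t = X n α k := by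
    apply Finset.sum_eq_single_of_mem k (Finset.mem_Icc.mpr (by omega))
    intro j hj hjk
    have hz := hkzero j (by simp only [Finset.mem_Ioc]; have := Finset.mem_Icc.mp hj; omega) hjk
    exact mul_self_eq_zero.mp hz
  have hXk1 : X n α k = 1 ∨ X n α k = -1 := mul_self_eq_one_iff.mp hk1
  have hm1 : m = 1 := by omega
  have hXkval : X n α k = 1 := by omega
  -- values of coordinates up to n
  have avals : ∀ t, 1 ≤ t → t ≤ n → cv n α t = if k ≤ t then 1 else 0 := by
    intro t h1 h2
    rw [← tel t (by omega) (by omega)]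
    by_cases hkt : k ≤ t
    · rw [if_pos hkt]
      rw [Finset.sum_eq_single_of_mem k (Finset.mem_Icc.mpr (by omega))]
      · exact hXkval
      · intro j hj hjk
        have hz := hkzero j (by simp only [Finset.mem_Ioc]; have := Finset.mem_Icc.mp hj; omega) hjk
        exact mul_self_eq_zero.mp hz
    · rw [if_neg hkt]
      apply Finset.sum_eq_zero
      intro j hj
      have hjm := Finset.mem_Icc.mp hj
      have hz := hkzero j (by simp only [Finset.mem_Ioc]; omega) (by omega)
      exact mul_self_eq_zero.mp hz
  refine ⟨k, by omega, by omega, ?_⟩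
  funext i
  rcases i with ⟨t, hti⟩
  rw [show α ⟨t, hti⟩ = cv n α t from (by unfold cv; rw [dif_pos hti])]
  simp only [βv, Fin.val_mk]
  rcases (by omega : t = 0 ∨ (1 ≤ t ∧ t ≤ n) ∨ (n+1 ≤ t ∧ t ≤ 2*n-2) ∨ t = 2*n-1 ∨ t = 2*n)
    with ht | ht | ht | ht | ht
  · subst ht
    rw [if_pos rfl]
    exact e0
  · rw [avals t ht.1 ht.2]
    split_ifs <;> omega
  · have h := emid (2*n - t) (by omega) (by omega)
    rw [show 2*n - (2*n - t) = t by omega] at h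
    rw [avals (2*n - t) (by omega) (by omega)] at h
    split_ifs at h ⊢ <;> omega
  · subst ht
    have h1v := avals 1 (by omega) (by omega)
    split_ifs at h1v ⊢ <;> omega
  · subst ht
    split_ifs <;> omega


lemma βv_inj (n : ℕ) (hn : 2 ≤ n) {k k' : ℕ} (hk1 : 1 ≤ k) (hk2 : k ≤ n)
    (hk1' : 1 ≤ k') (hk2' : k' ≤ n) (he : βv n k = βv n k') : k = k' := by
  by_contra hne
  rcases lt_or_gt_of_ne hne with h | h
  · have hc := congrFun he ⟨k, by omega⟩
    simp only [βv, Fin.val_mk] at hc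
    split_ifs at hc <;> omega
  · have hc := congrFun he ⟨k', by omega⟩
    simp only [βv, Fin.val_mk] at hc
    split_ifs at hc <;> omega


theorem statement1 (n : ℕ) (hn : 2 ≤ n) :
    (S n).Finite ∧ (S n).ncard = n ∧
    (∀ α ∈ S n, α + σmap n α = δ n) ∧
    (∀ α ∈ S n, ∀ α' ∈ S n, α ≠ α' → B n α α' = 0) := by
  have hSet : S n = ↑((Finset.Icc 1 n).image (βv n)) := by
    ext α
    simp only [Finset.coe_image, Set.mem_image, Finset.mem_coe, Finset.mem_Icc]
    constructor
    · intro hα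
      obtain ⟨k, hk1, hk2, hk3⟩ := Sclass n hn α hα
      exact ⟨k, ⟨hk1, hk2⟩, hk3.symm⟩
    · rintro ⟨k, ⟨hk1, hk2⟩, rfl⟩
      exact (βmem n hn k hk1 hk2).1
  have hinj : Set.InjOn (βv n) ↑(Finset.Icc 1 n) := by
    intro k hk k' hk' he
    simp only [Finset.coe_Icc, Set.mem_Icc] at hk hk'
    exact βv_inj n hn hk.1 hk.2 hk'.1 hk'.2 he
  refine ⟨by rw [hSet]; exact Finset.finite_toSet _, ?_, ?_, ?_⟩
  · rw [hSet, Set.ncard_coe_finset, Finset.card_image_of_injOn hinj, Nat.card_Icc]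
    omega
  · intro α hα
    obtain ⟨k, hk1, hk2, hk3⟩ := Sclass n hn α hα
    rw [hk3]
    exact (βmem n hn k hk1 hk2).2
  · intro α hα α' hα' hne
    obtain ⟨k, hk1, hk2, hk3⟩ := Sclass n hn α hα
    obtain ⟨k', hk1', hk2', hk3'⟩ := Sclass n hn α' hα'
    have hkk : k ≠ k' := by
      intro hEq
      apply hne
      rw [hk3, hk3', hEq]
    rw [hk3, hk3', Bββ n hn k k' hk1 hk2 hk1' hk2', if_neg hkk]


end Stmt1
end

section
/- The set S = \{\alpha \in \Delta_0^+ : \alpha + \sigma(\alpha) \in \mathbb{Z}_{>0}\cdot\delta\} has exactly 2 elements; moreover every \alpha \in S satisfies \alpha + \sigma(\alpha) = \delta, and the two elements of S are orthogonal with respect to B. In particular, S is the positive system of a subsystem of \Delta_0 of type 2A_1. -/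
/-!
Statement 2: For the affine root system of type `D_n^{(1)}` (`n ≥ 4`) with the
admissible diagram automorphism `σ` swapping `α_0 ↔ α_1` and `α_{n-1} ↔ α_n`,
the set `S = {α ∈ Δ₀⁺ : α + σ(α) ∈ ℤ_{>0}·δ}` has exactly `2` elements, every
`α ∈ S` satisfies `α + σ(α) = δ`, and the two elements of `S` are orthogonal
(type `2A₁`).
-/

namespace Stmt2

set_option maxHeartbeats 1600000

/-- The root lattice `Q = ⨁_{i ∈ I} ℤ α_i` for `I = {0,1,…,n}`. -/
abbrev Q (n : ℕ) := Fin (n + 1) → ℤ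

/-- The edges of the Dynkin diagram of affine type `D_n^{(1)}`:
`{0,2}`, `{1,2}`, `{k,k+1}` for `2 ≤ k ≤ n-2`, and `{n-2, n}`. -/
abbrev edge (n i j : ℕ) : Prop :=
  (i + 1 = j ∧ 2 ≤ i ∧ j ≤ n - 1) ∨ (j + 1 = i ∧ 2 ≤ j ∧ i ≤ n - 1) ∨
  (i = 0 ∧ j = 2) ∨ (i = 2 ∧ j = 0) ∨ (i = 1 ∧ j = 2) ∨ (i = 2 ∧ j = 1) ∨
  (i = n - 2 ∧ j = n) ∨ (i = n ∧ j = n - 2)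

/-- The generalized Cartan matrix of type `D_n^{(1)}`. -/
def CM (n : ℕ) (i j : Fin (n + 1)) : ℤ :=
  if i = j then 2 else if edge n (i : ℕ) (j : ℕ) then -1 else 0

/-- The symmetric bilinear form `B` on `Q` determined by the Cartan matrix. -/
def B (n : ℕ) (v w : Q n) : ℤ := ∑ i, ∑ j, v i * CM n i j * w j

/-- The set of positive real roots. -/
def ΔrePos (n : ℕ) : Set (Q n) := {v | (∀ i, 0 ≤ v i) ∧ B n v v = 2}

/-- The set `Δ₀⁺` of positive roots of the finite root system of type `D_n`. -/
def Δ0Pos (n : ℕ) : Set (Q n) := {v | v ∈ ΔrePos n ∧ v 0 = 0}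

/-- The primitive null root
`δ = α_0 + α_1 + 2(α_2 + ⋯ + α_{n-2}) + α_{n-1} + α_n`. -/
def δ (n : ℕ) : Q n := fun i =>
  if (i : ℕ) = 0 ∨ (i : ℕ) = 1 ∨ (i : ℕ) = n - 1 ∨ (i : ℕ) = n then 1 else 2

/-- The involution of the index set `{0,…,n}` swapping `0 ↔ 1` and `n-1 ↔ n`
(for `n ≥ 4`). -/
def τ (n : ℕ) (i : Fin (n + 1)) : Fin (n + 1) :=
  ⟨if (i : ℕ) = 0 then min 1 n else if (i : ℕ) = 1 then 0
    else if (i : ℕ) = n - 1 then n else if (i : ℕ) = n then n - 1 else (i : ℕ),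
   by have := i.isLt; split_ifs <;> omega⟩

/-- The admissible diagram automorphism `σ` swapping `α_0 ↔ α_1`, `α_{n-1} ↔ α_n`
and fixing the other `α_i` (on coordinates, via the involution `τ`). -/
def σmap (n : ℕ) (v : Q n) : Q n := fun i => v (τ n i)

/-- `S = {α ∈ Δ₀⁺ : α + σ(α) ∈ ℤ_{>0}·δ}`. -/
def S (n : ℕ) : Set (Q n) :=
  {α | α ∈ Δ0Pos n ∧ ∃ m : ℤ, 0 < m ∧ α + σmap n α = m • δ n}

/-! Auxiliary machinery -/

/-- `w n m a` is the vector `(0, m, m, …, m, a, m - a)`. -/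
def w (n : ℕ) (m a : ℤ) : Q n := fun i =>
  if (i : ℕ) = 0 then 0 else if (i : ℕ) = 1 then m
  else if (i : ℕ) = n - 1 then a else if (i : ℕ) = n then m - a else m

lemma ne_mk {N : ℕ} {j : Fin N} {c : ℕ} {h : c < N} (hj : j ≠ ⟨c, h⟩) : (j : ℕ) ≠ c :=
  fun hv => hj (Fin.ext hv)

lemma w_val (n : ℕ) (hn : 4 ≤ n) (m a c : ℤ) (i : Fin (n + 1)) (k : ℕ) (hk : (i : ℕ) = k)
    (h : (k = 0 ∧ c = 0) ∨ (k = 1 ∧ c = m) ∨ (k = n - 1 ∧ c = a) ∨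
         (k = n ∧ c = m - a) ∨ (2 ≤ k ∧ k ≤ n - 2 ∧ c = m)) :
    w n m a i = c := by
  have hlt := i.isLt
  simp only [w]
  split_ifs <;> omega

lemma τ_val (n : ℕ) (hn : 4 ≤ n) (i : Fin (n + 1)) (k c : ℕ) (hk : (i : ℕ) = k)
    (h : (k = 0 ∧ c = 1) ∨ (k = 1 ∧ c = 0) ∨ (k = n - 1 ∧ c = n) ∨
         (k = n ∧ c = n - 1) ∨ (2 ≤ k ∧ k ≤ n - 2 ∧ c = k)) :
    ((τ n i : Fin (n + 1)) : ℕ) = c := by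
  have hlt := i.isLt
  simp only [τ]
  split_ifs <;> omega

lemma δ_val (n : ℕ) (hn : 4 ≤ n) (c : ℤ) (i : Fin (n + 1)) (k : ℕ) (hk : (i : ℕ) = k)
    (h : ((k = 0 ∨ k = 1 ∨ k = n - 1 ∨ k = n) ∧ c = 1) ∨
         (2 ≤ k ∧ k ≤ n - 2 ∧ c = 2)) :
    δ n i = c := by
  have hlt := i.isLt
  simp only [δ]
  split_ifs <;> omega

lemma CM_val (n : ℕ) (i j : Fin (n + 1)) (ki kj : ℕ) (hki : (i : ℕ) = ki)
    (hkj : (j : ℕ) = kj) (c : ℤ)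
    (h : (ki = kj ∧ c = 2) ∨ (¬ ki = kj ∧ edge n ki kj ∧ c = -1) ∨
         (¬ ki = kj ∧ ¬ edge n ki kj ∧ c = 0)) :
    CM n i j = c := by
  subst hki hkj
  rcases h with ⟨h1, rfl⟩ | ⟨h1, h2, rfl⟩ | ⟨h1, h2, rfl⟩
  · simp only [CM]; rw [if_pos (Fin.ext h1)]
  · simp only [CM]; rw [if_neg (fun hh => h1 (congrArg Fin.val hh)), if_pos h2]
  · simp only [CM]; rw [if_neg (fun hh => h1 (congrArg Fin.val hh)), if_neg h2]

/-! Sums of functions with small support. -/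

lemma sum_eq_two {N : ℕ} (g : Fin N → ℤ) (p q : Fin N) (vp vq : ℤ)
    (hp : g p = vp) (hq : g q = vq) (hpq : p ≠ q)
    (h0 : ∀ j, j ≠ p → j ≠ q → g j = 0) : ∑ j, g j = vp + vq := by
  have h : ∑ j ∈ ({p, q} : Finset (Fin N)), g j = ∑ j, g j :=
    Finset.sum_subset (Finset.subset_univ _) fun x _ hx => by
      simp only [Finset.mem_insert, Finset.mem_singleton, not_or] at hx
      exact h0 x hx.1 hx.2
  rw [← h, Finset.sum_insert (by simp [hpq]), Finset.sum_singleton, hp, hq]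

lemma sum_eq_three {N : ℕ} (g : Fin N → ℤ) (p q r : Fin N) (vp vq vr : ℤ)
    (hp : g p = vp) (hq : g q = vq) (hr : g r = vr)
    (hpq : p ≠ q) (hpr : p ≠ r) (hqr : q ≠ r)
    (h0 : ∀ j, j ≠ p → j ≠ q → j ≠ r → g j = 0) : ∑ j, g j = vp + vq + vr := by
  have h : ∑ j ∈ ({p, q, r} : Finset (Fin N)), g j = ∑ j, g j :=
    Finset.sum_subset (Finset.subset_univ _) fun x _ hx => by
      simp only [Finset.mem_insert, Finset.mem_singleton, not_or] at hx
      exact h0 x hx.1 hx.2.1 hx.2.2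
  rw [← h, Finset.sum_insert (by simp [hpq, hpr]), Finset.sum_insert (by simp [hqr]),
    Finset.sum_singleton, hp, hq, hr, add_assoc]

lemma sum_eq_four {N : ℕ} (g : Fin N → ℤ) (p q r s : Fin N) (vp vq vr vs : ℤ)
    (hp : g p = vp) (hq : g q = vq) (hr : g r = vr) (hs : g s = vs)
    (hpq : p ≠ q) (hpr : p ≠ r) (hps : p ≠ s) (hqr : q ≠ r) (hqs : q ≠ s) (hrs : r ≠ s)
    (h0 : ∀ j, j ≠ p → j ≠ q → j ≠ r → j ≠ s → g j = 0) :
    ∑ j, g j = vp + vq + vr + vs := by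
  have h : ∑ j ∈ ({p, q, r, s} : Finset (Fin N)), g j = ∑ j, g j :=
    Finset.sum_subset (Finset.subset_univ _) fun x _ hx => by
      simp only [Finset.mem_insert, Finset.mem_singleton, not_or] at hx
      exact h0 x hx.1 hx.2.1 hx.2.2.1 hx.2.2.2
  rw [← h, Finset.sum_insert (by simp [hpq, hpr, hps]),
    Finset.sum_insert (by simp [hqr, hqs]), Finset.sum_insert (by simp [hrs]),
    Finset.sum_singleton, hp, hq, hr, hs]
  ring

lemma sum_eq_five {N : ℕ} (g : Fin N → ℤ) (p q r s t : Fin N) (vp vq vr vs vt : ℤ)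
    (hp : g p = vp) (hq : g q = vq) (hr : g r = vr) (hs : g s = vs) (ht : g t = vt)
    (hpq : p ≠ q) (hpr : p ≠ r) (hps : p ≠ s) (hpt : p ≠ t)
    (hqr : q ≠ r) (hqs : q ≠ s) (hqt : q ≠ t) (hrs : r ≠ s) (hrt : r ≠ t) (hst : s ≠ t)
    (h0 : ∀ j, j ≠ p → j ≠ q → j ≠ r → j ≠ s → j ≠ t → g j = 0) :
    ∑ j, g j = vp + vq + vr + vs + vt := by
  have h : ∑ j ∈ ({p, q, r, s, t} : Finset (Fin N)), g j = ∑ j, g j :=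
    Finset.sum_subset (Finset.subset_univ _) fun x _ hx => by
      simp only [Finset.mem_insert, Finset.mem_singleton, not_or] at hx
      exact h0 x hx.1 hx.2.1 hx.2.2.1 hx.2.2.2.1 hx.2.2.2.2
  rw [← h, Finset.sum_insert (by simp [hpq, hpr, hps, hpt]),
    Finset.sum_insert (by simp [hqr, hqs, hqt]), Finset.sum_insert (by simp [hrs, hrt]),
    Finset.sum_insert (by simp [hst]), Finset.sum_singleton, hp, hq, hr, hs, ht]
  ring



lemma mk_ne_mk {N a b : ℕ} {ha : a < N} {hb : b < N} (h : a ≠ b) :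
    (⟨a, ha⟩ : Fin N) ≠ ⟨b, hb⟩ := fun he => h (congrArg Fin.val he)

lemma bc {n : ℕ} (hn : 4 ≤ n) {c : ℕ} (hc : c ≤ 4) : c < n + 1 :=
  Nat.lt_succ_of_le (hc.trans hn)

lemma bs (n c : ℕ) : n - c < n + 1 := Nat.lt_succ_of_le (Nat.sub_le n c)

/-! Helpers to prove `edge` facts cheaply. -/

lemma edge_D1 {n i j : ℕ} (h : i + 1 = j ∧ 2 ≤ i ∧ j ≤ n - 1) : edge n i j := Or.inl h
lemma edge_D2 {n i j : ℕ} (h : j + 1 = i ∧ 2 ≤ j ∧ i ≤ n - 1) : edge n i j :=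
  Or.inr (Or.inl h)
lemma edge_D4 {n i j : ℕ} (h : i = 2 ∧ j = 0) : edge n i j :=
  Or.inr (Or.inr (Or.inr (Or.inl h)))
lemma edge_D5 {n i j : ℕ} (h : i = 1 ∧ j = 2) : edge n i j :=
  Or.inr (Or.inr (Or.inr (Or.inr (Or.inl h))))
lemma edge_D6 {n i j : ℕ} (h : i = 2 ∧ j = 1) : edge n i j :=
  Or.inr (Or.inr (Or.inr (Or.inr (Or.inr (Or.inl h)))))
lemma edge_D7 {n i j : ℕ} (h : i = n - 2 ∧ j = n) : edge n i j :=
  Or.inr (Or.inr (Or.inr (Or.inr (Or.inr (Or.inr (Or.inl h))))))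
lemma edge_D8 {n i j : ℕ} (h : i = n ∧ j = n - 2) : edge n i j :=
  Or.inr (Or.inr (Or.inr (Or.inr (Or.inr (Or.inr (Or.inr h))))))

/-! Row sums of the Cartan matrix against `w n m' a'`. -/

set_option maxHeartbeats 4000000 in
lemma row1 (n : ℕ) (hn : 4 ≤ n) (m' a' : ℤ) (i : Fin (n + 1)) (hi : (i : ℕ) = 1) :
    ∑ j, CM n i j * w n m' a' j = m' := by
  have hp : CM n i ⟨1, bc hn (by decide)⟩ * w n m' a' ⟨1, bc hn (by decide)⟩ = 2 * m' := by
    rw [CM_val n i ⟨1, bc hn (by decide)⟩ 1 1 hi rfl 2 (Or.inl ⟨rfl, rfl⟩),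
        w_val n hn m' a' m' ⟨1, bc hn (by decide)⟩ 1 rfl (Or.inr (Or.inl (by omega)))]
  have hq : CM n i ⟨2, bc hn (by decide)⟩ * w n m' a' ⟨2, bc hn (by decide)⟩ = -1 * m' := by
    rw [CM_val n i ⟨2, bc hn (by decide)⟩ 1 2 hi rfl (-1)
          (Or.inr (Or.inl ⟨by omega, edge_D5 (by omega), rfl⟩)),
        w_val n hn m' a' m' ⟨2, bc hn (by decide)⟩ 2 rfl (Or.inr (Or.inr (Or.inr (Or.inr (by omega)))))]
  rw [sum_eq_two (fun j => CM n i j * w n m' a' j) ⟨1, bc hn (by decide)⟩ ⟨2, bc hn (by decide)⟩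
    (2 * m') (-1 * m') hp hq (mk_ne_mk (by omega))
    (by
      intro j hj1 hj2
      have h1 := ne_mk hj1
      have h2 := ne_mk hj2
      show CM n i j * w n m' a' j = 0
      rw [CM_val n i j 1 (j : ℕ) hi rfl 0
        (Or.inr (Or.inr ⟨by omega, by omega, rfl⟩)), zero_mul])]
  ring

set_option maxHeartbeats 4000000 in
lemma row_last1 (n : ℕ) (hn : 4 ≤ n) (m' a' : ℤ) (i : Fin (n + 1))
    (hi : (i : ℕ) = n - 1) : ∑ j, CM n i j * w n m' a' j = 2 * a' - m' := by
  have hp : CM n i ⟨n - 2, bs n 2⟩ * w n m' a' ⟨n - 2, bs n 2⟩ = -1 * m' := by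
    rw [CM_val n i ⟨n - 2, bs n 2⟩ (n - 1) (n - 2) hi rfl (-1)
          (Or.inr (Or.inl ⟨by omega, edge_D2 (by omega), rfl⟩)),
        w_val n hn m' a' m' ⟨n - 2, bs n 2⟩ (n - 2) rfl (Or.inr (Or.inr (Or.inr (Or.inr (by omega)))))]
  have hq : CM n i ⟨n - 1, bs n 1⟩ * w n m' a' ⟨n - 1, bs n 1⟩ = 2 * a' := by
    rw [CM_val n i ⟨n - 1, bs n 1⟩ (n - 1) (n - 1) hi rfl 2 (Or.inl ⟨rfl, rfl⟩),
        w_val n hn m' a' a' ⟨n - 1, bs n 1⟩ (n - 1) rfl (Or.inr (Or.inr (Or.inl (by omega))))]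
  rw [sum_eq_two (fun j => CM n i j * w n m' a' j) ⟨n - 2, bs n 2⟩ ⟨n - 1, bs n 1⟩
    (-1 * m') (2 * a') hp hq (mk_ne_mk (by omega))
    (by
      intro j hj1 hj2
      have h1 := ne_mk hj1
      have h2 := ne_mk hj2
      have hlt := j.isLt
      show CM n i j * w n m' a' j = 0
      rw [CM_val n i j (n - 1) (j : ℕ) hi rfl 0
        (Or.inr (Or.inr ⟨by omega, by omega, rfl⟩)), zero_mul])]
  ring

set_option maxHeartbeats 4000000 in
lemma row_last (n : ℕ) (hn : 4 ≤ n) (m' a' : ℤ) (i : Fin (n + 1))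
    (hi : (i : ℕ) = n) : ∑ j, CM n i j * w n m' a' j = 2 * (m' - a') - m' := by
  have hp : CM n i ⟨n - 2, bs n 2⟩ * w n m' a' ⟨n - 2, bs n 2⟩ = -1 * m' := by
    rw [CM_val n i ⟨n - 2, bs n 2⟩ n (n - 2) hi rfl (-1)
          (Or.inr (Or.inl ⟨by omega, edge_D8 (by omega), rfl⟩)),
        w_val n hn m' a' m' ⟨n - 2, bs n 2⟩ (n - 2) rfl (Or.inr (Or.inr (Or.inr (Or.inr (by omega)))))]
  have hq : CM n i ⟨n, n.lt_succ_self⟩ * w n m' a' ⟨n, n.lt_succ_self⟩ = 2 * (m' - a') := by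
    rw [CM_val n i ⟨n, n.lt_succ_self⟩ n n hi rfl 2 (Or.inl ⟨rfl, rfl⟩),
        w_val n hn m' a' (m' - a') ⟨n, n.lt_succ_self⟩ n rfl (Or.inr (Or.inr (Or.inr (Or.inl (by omega)))))]
  rw [sum_eq_two (fun j => CM n i j * w n m' a' j) ⟨n - 2, bs n 2⟩ ⟨n, n.lt_succ_self⟩
    (-1 * m') (2 * (m' - a')) hp hq (mk_ne_mk (by omega))
    (by
      intro j hj1 hj2
      have h1 := ne_mk hj1
      have h2 := ne_mk hj2
      have hlt := j.isLt
      show CM n i j * w n m' a' j = 0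
      rw [CM_val n i j n (j : ℕ) hi rfl 0
        (Or.inr (Or.inr ⟨by omega, by omega, rfl⟩)), zero_mul])]
  ring

set_option maxHeartbeats 4000000 in
lemma row_mid (n : ℕ) (hn : 4 ≤ n) (m' a' : ℤ) (i : Fin (n + 1)) (h2 : 2 ≤ (i : ℕ))
    (h3 : (i : ℕ) ≤ n - 2) : ∑ j, CM n i j * w n m' a' j = 0 := by
  rcases Nat.lt_or_ge n 5 with h5 | h5
  · -- `n = 4`, so `i = 2` and the sum is over all five indices
    have hn4 : n = 4 := by omega
    subst hn4
    have hi : i = ⟨2, by decide⟩ := Fin.ext (show (i : ℕ) = 2 by omega)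
    subst hi
    rw [Fin.sum_univ_five]
    show (-1) * 0 + (-1) * m' + 2 * m' + (-1) * a' + (-1) * (m' - a') = 0
    ring
  · rcases eq_or_ne (i : ℕ) 2 with hi2 | hi2
    · -- i = 2, n ≥ 5 : support {0,1,2,3}
      have hp : CM n i ⟨0, bc hn (by decide)⟩ * w n m' a' ⟨0, bc hn (by decide)⟩ = -1 * 0 := by
        rw [CM_val n i ⟨0, bc hn (by decide)⟩ 2 0 hi2 rfl (-1)
              (Or.inr (Or.inl ⟨by omega, edge_D4 (by omega), rfl⟩)),
            w_val n hn m' a' 0 ⟨0, bc hn (by decide)⟩ 0 rfl (Or.inl (by omega))]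
      have hq : CM n i ⟨1, bc hn (by decide)⟩ * w n m' a' ⟨1, bc hn (by decide)⟩ = -1 * m' := by
        rw [CM_val n i ⟨1, bc hn (by decide)⟩ 2 1 hi2 rfl (-1)
              (Or.inr (Or.inl ⟨by omega, edge_D6 (by omega), rfl⟩)),
            w_val n hn m' a' m' ⟨1, bc hn (by decide)⟩ 1 rfl (Or.inr (Or.inl (by omega)))]
      have hr : CM n i ⟨2, bc hn (by decide)⟩ * w n m' a' ⟨2, bc hn (by decide)⟩ = 2 * m' := by
        rw [CM_val n i ⟨2, bc hn (by decide)⟩ 2 2 hi2 rfl 2 (Or.inl ⟨rfl, rfl⟩),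
            w_val n hn m' a' m' ⟨2, bc hn (by decide)⟩ 2 rfl (Or.inr (Or.inr (Or.inr (Or.inr (by omega)))))]
      have hs : CM n i ⟨3, bc hn (by decide)⟩ * w n m' a' ⟨3, bc hn (by decide)⟩ = -1 * m' := by
        rw [CM_val n i ⟨3, bc hn (by decide)⟩ 2 3 hi2 rfl (-1)
              (Or.inr (Or.inl ⟨by omega, edge_D1 (by omega), rfl⟩)),
            w_val n hn m' a' m' ⟨3, bc hn (by decide)⟩ 3 rfl (Or.inr (Or.inr (Or.inr (Or.inr (by omega)))))]
      rw [sum_eq_four (fun j => CM n i j * w n m' a' j) ⟨0, bc hn (by decide)⟩ ⟨1, bc hn (by decide)⟩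
        ⟨2, bc hn (by decide)⟩ ⟨3, bc hn (by decide)⟩ (-1 * 0) (-1 * m') (2 * m') (-1 * m') hp hq hr hs
        (mk_ne_mk (by omega)) (mk_ne_mk (by omega))
        (mk_ne_mk (by omega)) (mk_ne_mk (by omega))
        (mk_ne_mk (by omega)) (mk_ne_mk (by omega))
        (by
          intro j hj0 hj1 hj2 hj3
          have g0 := ne_mk hj0
          have g1 := ne_mk hj1
          have g2 := ne_mk hj2
          have g3 := ne_mk hj3
          have hlt := j.isLt
          show CM n i j * w n m' a' j = 0
          rw [CM_val n i j 2 (j : ℕ) hi2 rfl 0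
            (Or.inr (Or.inr ⟨by omega, by omega, rfl⟩)), zero_mul])]
      ring
    · rcases eq_or_ne (i : ℕ) (n - 2) with hin2 | hin2
      · -- i = n - 2, n ≥ 5 : support {n-3, n-2, n-1, n}
        have hp : CM n i ⟨n - 3, bs n 3⟩ * w n m' a' ⟨n - 3, bs n 3⟩ = -1 * m' := by
          rw [CM_val n i ⟨n - 3, bs n 3⟩ (n - 2) (n - 3) hin2 rfl (-1)
                (Or.inr (Or.inl ⟨by omega, edge_D2 (by omega), rfl⟩)),
              w_val n hn m' a' m' ⟨n - 3, bs n 3⟩ (n - 3) rfl (Or.inr (Or.inr (Or.inr (Or.inr (by omega)))))]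
        have hq : CM n i ⟨n - 2, bs n 2⟩ * w n m' a' ⟨n - 2, bs n 2⟩ = 2 * m' := by
          rw [CM_val n i ⟨n - 2, bs n 2⟩ (n - 2) (n - 2) hin2 rfl 2 (Or.inl ⟨rfl, rfl⟩),
              w_val n hn m' a' m' ⟨n - 2, bs n 2⟩ (n - 2) rfl (Or.inr (Or.inr (Or.inr (Or.inr (by omega)))))]
        have hr : CM n i ⟨n - 1, bs n 1⟩ * w n m' a' ⟨n - 1, bs n 1⟩ = -1 * a' := by
          rw [CM_val n i ⟨n - 1, bs n 1⟩ (n - 2) (n - 1) hin2 rfl (-1)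
                (Or.inr (Or.inl ⟨by omega, edge_D1 (by omega), rfl⟩)),
              w_val n hn m' a' a' ⟨n - 1, bs n 1⟩ (n - 1) rfl (Or.inr (Or.inr (Or.inl (by omega))))]
        have hs : CM n i ⟨n, n.lt_succ_self⟩ * w n m' a' ⟨n, n.lt_succ_self⟩ = -1 * (m' - a') := by
          rw [CM_val n i ⟨n, n.lt_succ_self⟩ (n - 2) n hin2 rfl (-1)
                (Or.inr (Or.inl ⟨by omega, edge_D7 (by omega), rfl⟩)),
              w_val n hn m' a' (m' - a') ⟨n, n.lt_succ_self⟩ n rfl (Or.inr (Or.inr (Or.inr (Or.inl (by omega)))))]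
        rw [sum_eq_four (fun j => CM n i j * w n m' a' j) ⟨n - 3, bs n 3⟩ ⟨n - 2, bs n 2⟩
          ⟨n - 1, bs n 1⟩ ⟨n, n.lt_succ_self⟩ (-1 * m') (2 * m') (-1 * a') (-1 * (m' - a'))
          hp hq hr hs
          (mk_ne_mk (by omega)) (mk_ne_mk (by omega))
          (mk_ne_mk (by omega)) (mk_ne_mk (by omega))
          (mk_ne_mk (by omega)) (mk_ne_mk (by omega))
          (by
            intro j hj0 hj1 hj2 hj3
            have g0 := ne_mk hj0
            have g1 := ne_mk hj1
            have g2 := ne_mk hj2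
            have g3 := ne_mk hj3
            have hlt := j.isLt
            show CM n i j * w n m' a' j = 0
            rw [CM_val n i j (n - 2) (j : ℕ) hin2 rfl 0
              (Or.inr (Or.inr ⟨by omega, by omega, rfl⟩)), zero_mul])]
        ring
      · -- 3 ≤ i ≤ n - 3 : support {i-1, i, i+1}
        have hlo : 3 ≤ (i : ℕ) := by omega
        have hhi : (i : ℕ) ≤ n - 3 := by omega
        have hlt := i.isLt
        have hp : CM n i ⟨(i : ℕ) - 1, by omega⟩ * w n m' a' ⟨(i : ℕ) - 1, by omega⟩
            = -1 * m' := by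
          rw [CM_val n i ⟨(i : ℕ) - 1, by omega⟩ (i : ℕ) ((i : ℕ) - 1) rfl rfl (-1)
                (Or.inr (Or.inl ⟨by omega, edge_D2 (by omega), rfl⟩)),
              w_val n hn m' a' m' ⟨(i : ℕ) - 1, by omega⟩ ((i : ℕ) - 1) rfl (Or.inr (Or.inr (Or.inr (Or.inr (by omega)))))]
        have hq : CM n i ⟨(i : ℕ), i.isLt⟩ * w n m' a' ⟨(i : ℕ), i.isLt⟩ = 2 * m' := by
          rw [CM_val n i ⟨(i : ℕ), i.isLt⟩ (i : ℕ) (i : ℕ) rfl rfl 2 (Or.inl ⟨rfl, rfl⟩),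
              w_val n hn m' a' m' ⟨(i : ℕ), i.isLt⟩ (i : ℕ) rfl (Or.inr (Or.inr (Or.inr (Or.inr (by omega)))))]
        have hr : CM n i ⟨(i : ℕ) + 1, by omega⟩ * w n m' a' ⟨(i : ℕ) + 1, by omega⟩
            = -1 * m' := by
          rw [CM_val n i ⟨(i : ℕ) + 1, by omega⟩ (i : ℕ) ((i : ℕ) + 1) rfl rfl (-1)
                (Or.inr (Or.inl ⟨by omega, edge_D1 (by omega), rfl⟩)),
              w_val n hn m' a' m' ⟨(i : ℕ) + 1, by omega⟩ ((i : ℕ) + 1) rfl (Or.inr (Or.inr (Or.inr (Or.inr (by omega)))))]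
        rw [sum_eq_three (fun j => CM n i j * w n m' a' j) ⟨(i : ℕ) - 1, by omega⟩
          ⟨(i : ℕ), i.isLt⟩ ⟨(i : ℕ) + 1, by omega⟩ (-1 * m') (2 * m') (-1 * m') hp hq hr
          (mk_ne_mk (by omega)) (mk_ne_mk (by omega))
          (mk_ne_mk (by omega))
          (by
            intro j hj0 hj1 hj2
            have g0 := ne_mk hj0
            have g1 := ne_mk hj1
            have g2 := ne_mk hj2
            have hjlt := j.isLt
            show CM n i j * w n m' a' j = 0
            rw [CM_val n i j (i : ℕ) (j : ℕ) rfl rfl 0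
              (Or.inr (Or.inr ⟨by omega, by omega, rfl⟩)), zero_mul])]
        ring

/-! The bilinear form on vectors of the shape `w`. -/

set_option maxHeartbeats 4000000 in
lemma B_w (n : ℕ) (hn : 4 ≤ n) (m a m' a' : ℤ) :
    B n (w n m a) (w n m' a') = 2 * (a * a') + 2 * ((m - a) * (m' - a')) := by
  have hB : B n (w n m a) (w n m' a')
      = ∑ i, w n m a i * ∑ j, CM n i j * w n m' a' j := by
    simp only [B]
    refine Finset.sum_congr rfl fun i _ => ?_
    rw [Finset.mul_sum]
    exact Finset.sum_congr rfl fun j _ => by ring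
  have hp : w n m a ⟨1, bc hn (by decide)⟩ * ∑ j, CM n ⟨1, bc hn (by decide)⟩ j * w n m' a' j
      = m * m' := by
    rw [row1 n hn m' a' ⟨1, bc hn (by decide)⟩ rfl,
        w_val n hn m a m ⟨1, bc hn (by decide)⟩ 1 rfl (Or.inr (Or.inl (by omega)))]
  have hq : w n m a ⟨n - 1, bs n 1⟩ * ∑ j, CM n ⟨n - 1, bs n 1⟩ j * w n m' a' j
      = a * (2 * a' - m') := by
    rw [row_last1 n hn m' a' ⟨n - 1, bs n 1⟩ rfl,
        w_val n hn m a a ⟨n - 1, bs n 1⟩ (n - 1) rfl (Or.inr (Or.inr (Or.inl (by omega))))]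
  have hr : w n m a ⟨n, n.lt_succ_self⟩ * ∑ j, CM n ⟨n, n.lt_succ_self⟩ j * w n m' a' j
      = (m - a) * (2 * (m' - a') - m') := by
    rw [row_last n hn m' a' ⟨n, n.lt_succ_self⟩ rfl,
        w_val n hn m a (m - a) ⟨n, n.lt_succ_self⟩ n rfl (Or.inr (Or.inr (Or.inr (Or.inl (by omega)))))]
  rw [hB, sum_eq_three (fun i => w n m a i * ∑ j, CM n i j * w n m' a' j)
    ⟨1, bc hn (by decide)⟩ ⟨n - 1, bs n 1⟩ ⟨n, n.lt_succ_self⟩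
    (m * m') (a * (2 * a' - m')) ((m - a) * (2 * (m' - a') - m')) hp hq hr
    (mk_ne_mk (by omega)) (mk_ne_mk (by omega))
    (mk_ne_mk (by omega))
    (by
      intro j hj1 hj2 hj3
      have g1 := ne_mk hj1
      have g2 := ne_mk hj2
      have g3 := ne_mk hj3
      have hlt := j.isLt
      show w n m a j * (∑ x, CM n j x * w n m' a' x) = 0
      rcases eq_or_ne (j : ℕ) 0 with h0 | h0
      · rw [w_val n hn m a 0 j (j : ℕ) rfl (Or.inl (by omega)), zero_mul]
      · rw [row_mid n hn m' a' j (by omega) (by omega), mul_zero])]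
  ring

/-! `w n m a` is compatible with `σ`. -/

set_option maxHeartbeats 4000000 in
lemma w_sigma (n : ℕ) (hn : 4 ≤ n) (m a : ℤ) :
    w n m a + σmap n (w n m a) = m • δ n := by
  funext i
  have hlt := i.isLt
  simp only [Pi.add_apply, Pi.smul_apply, smul_eq_mul, σmap]
  by_cases h0 : (i : ℕ) = 0
  · rw [show τ n i = ⟨1, bc hn (by decide)⟩ from Fin.ext (τ_val n hn i (i : ℕ) 1 rfl (Or.inl (by omega))),
        w_val n hn m a 0 i (i : ℕ) rfl (Or.inl (by omega)),
        w_val n hn m a m ⟨1, bc hn (by decide)⟩ 1 rfl (Or.inr (Or.inl (by omega))),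
        δ_val n hn 1 i (i : ℕ) rfl (Or.inl (by omega))]
    ring
  by_cases h1 : (i : ℕ) = 1
  · rw [show τ n i = ⟨0, bc hn (by decide)⟩ from Fin.ext (τ_val n hn i (i : ℕ) 0 rfl (Or.inr (Or.inl (by omega)))),
        w_val n hn m a m i (i : ℕ) rfl (Or.inr (Or.inl (by omega))),
        w_val n hn m a 0 ⟨0, bc hn (by decide)⟩ 0 rfl (Or.inl (by omega)),
        δ_val n hn 1 i (i : ℕ) rfl (Or.inl (by omega))]
    ring
  by_cases hn1 : (i : ℕ) = n - 1
  · rw [show τ n i = ⟨n, n.lt_succ_self⟩ from Fin.ext (τ_val n hn i (i : ℕ) n rfl (Or.inr (Or.inr (Or.inl (by omega))))),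
        w_val n hn m a a i (i : ℕ) rfl (Or.inr (Or.inr (Or.inl (by omega)))),
        w_val n hn m a (m - a) ⟨n, n.lt_succ_self⟩ n rfl (Or.inr (Or.inr (Or.inr (Or.inl (by omega))))),
        δ_val n hn 1 i (i : ℕ) rfl (Or.inl (by omega))]
    ring
  by_cases hnn : (i : ℕ) = n
  · rw [show τ n i = ⟨n - 1, bs n 1⟩ from
        Fin.ext (τ_val n hn i (i : ℕ) (n - 1) rfl (Or.inr (Or.inr (Or.inr (Or.inl (by omega)))))),
        w_val n hn m a (m - a) i (i : ℕ) rfl (Or.inr (Or.inr (Or.inr (Or.inl (by omega))))),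
        w_val n hn m a a ⟨n - 1, bs n 1⟩ (n - 1) rfl (Or.inr (Or.inr (Or.inl (by omega)))),
        δ_val n hn 1 i (i : ℕ) rfl (Or.inl (by omega))]
    ring
  · rw [show τ n i = i from Fin.ext (τ_val n hn i (i : ℕ) (i : ℕ) rfl (Or.inr (Or.inr (Or.inr (Or.inr (by omega)))))),
        w_val n hn m a m i (i : ℕ) rfl (Or.inr (Or.inr (Or.inr (Or.inr (by omega))))),
        δ_val n hn 2 i (i : ℕ) rfl (Or.inr (by omega))]
    ring

set_option maxHeartbeats 4000000 in
lemma w_mem_S (n : ℕ) (hn : 4 ≤ n) (a : ℤ) (ha : a = 0 ∨ a = 1) : w n 1 a ∈ S n := by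
  refine ⟨⟨⟨fun i => ?_, ?_⟩, ?_⟩, 1, one_pos, ?_⟩
  · have hlt := i.isLt
    simp only [w]
    split_ifs <;> omega
  · rw [B_w n hn]
    rcases ha with rfl | rfl <;> norm_num
  · rw [w_val n hn 1 a 0 0 0 (Fin.val_zero (n+1)) (Or.inl (by omega))]
  · exact w_sigma n hn 1 a

set_option maxHeartbeats 4000000 in
lemma mem_S_iff (n : ℕ) (hn : 4 ≤ n) (α : Q n) :
    α ∈ S n ↔ α = w n 1 0 ∨ α = w n 1 1 := by
  constructor
  · rintro ⟨⟨⟨hpos, hB2⟩, h0⟩, m, hm, hσ⟩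
    have hσ' : ∀ i : Fin (n + 1), α i + α (τ n i) = m * δ n i := by
      intro i
      have h := congrFun hσ i
      simpa only [Pi.add_apply, Pi.smul_apply, smul_eq_mul, σmap] using h
    have h00 : α ⟨0, bc hn (by decide)⟩ = 0 := by
      rwa [show (⟨0, bc hn (by decide)⟩ : Fin (n + 1)) = 0 from Fin.ext (Fin.val_zero (n+1)).symm]
    -- coordinate 0
    have e0 := hσ' ⟨0, bc hn (by decide)⟩
    rw [show τ n ⟨0, bc hn (by decide)⟩ = ⟨1, bc hn (by decide)⟩ from
          Fin.ext (τ_val n hn ⟨0, bc hn (by decide)⟩ 0 1 rfl (Or.inl (by omega))),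
        δ_val n hn 1 ⟨0, bc hn (by decide)⟩ 0 rfl (Or.inl (by omega)), h00] at e0
    have h11 : α ⟨1, bc hn (by decide)⟩ = m := by omega
    -- middle coordinates
    have hmid : ∀ i : Fin (n + 1), 2 ≤ (i : ℕ) → (i : ℕ) ≤ n - 2 → α i = m := by
      intro i hi2 hi3
      have e := hσ' i
      rw [show τ n i = i from Fin.ext (τ_val n hn i (i : ℕ) (i : ℕ) rfl (Or.inr (Or.inr (Or.inr (Or.inr (by omega)))))),
          δ_val n hn 2 i (i : ℕ) rfl (Or.inr (by omega))] at e
      omega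
    -- coordinates n-1, n
    obtain ⟨a, ha_def⟩ : ∃ a, α ⟨n - 1, bs n 1⟩ = a := ⟨_, rfl⟩
    have en1 := hσ' ⟨n - 1, bs n 1⟩
    rw [show τ n ⟨n - 1, bs n 1⟩ = ⟨n, n.lt_succ_self⟩ from
          Fin.ext (τ_val n hn ⟨n - 1, bs n 1⟩ (n - 1) n rfl (Or.inr (Or.inr (Or.inl (by omega))))),
        δ_val n hn 1 ⟨n - 1, bs n 1⟩ (n - 1) rfl (Or.inl (by omega)), ha_def] at en1
    have hnn : α ⟨n, n.lt_succ_self⟩ = m - a := by omega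
    have hshape : α = w n m a := by
      funext i
      have hlt := i.isLt
      by_cases k0 : (i : ℕ) = 0
      · rw [w_val n hn m a 0 i (i : ℕ) rfl (Or.inl (by omega)),
          show i = ⟨0, bc hn (by decide)⟩ from Fin.ext k0]
        exact h00
      by_cases k1 : (i : ℕ) = 1
      · rw [w_val n hn m a m i (i : ℕ) rfl (Or.inr (Or.inl (by omega))),
          show i = ⟨1, bc hn (by decide)⟩ from Fin.ext k1]
        exact h11
      by_cases kn1 : (i : ℕ) = n - 1
      · rw [w_val n hn m a a i (i : ℕ) rfl (Or.inr (Or.inr (Or.inl (by omega)))),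
          show i = ⟨n - 1, bs n 1⟩ from Fin.ext kn1]
        exact ha_def
      by_cases kn : (i : ℕ) = n
      · rw [w_val n hn m a (m - a) i (i : ℕ) rfl (Or.inr (Or.inr (Or.inr (Or.inl (by omega))))),
          show i = ⟨n, n.lt_succ_self⟩ from Fin.ext kn]
        exact hnn
      · rw [w_val n hn m a m i (i : ℕ) rfl (Or.inr (Or.inr (Or.inr (Or.inr (by omega)))))]
        exact hmid i (by omega) (by omega)
    rw [hshape, B_w n hn] at hB2
    have ha0 : 0 ≤ a := ha_def ▸ hpos ⟨n - 1, bs n 1⟩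
    have hma : 0 ≤ m - a := hnn ▸ hpos ⟨n, n.lt_succ_self⟩
    have ha1 : a ≤ 1 := by nlinarith
    have : a = 0 ∨ a = 1 := by omega
    rcases this with rfl | rfl
    · left
      have hmm : 2 * ((m - 1) * (m + 1)) = 0 := by linear_combination hB2
      have hmm' : (m - 1) * (m + 1) = 0 := by linarith
      rcases mul_eq_zero.mp hmm' with h | h
      · rw [show m = 1 by linarith] at hshape
        exact hshape
      · exfalso; linarith
    · right
      have hmm : (m - 1) * (m - 1) = 0 := by linarith
      have : m - 1 = 0 := mul_self_eq_zero.mp hmm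
      rw [show m = 1 by linarith] at hshape
      exact hshape
  · rintro (rfl | rfl)
    · exact w_mem_S n hn 0 (Or.inl rfl)
    · exact w_mem_S n hn 1 (Or.inr rfl)

set_option maxHeartbeats 4000000 in
theorem statement2 (n : ℕ) (hn : 4 ≤ n) :
    (S n).Finite ∧ (S n).ncard = 2 ∧
    (∀ α ∈ S n, α + σmap n α = δ n) ∧
    (∀ α ∈ S n, ∀ α' ∈ S n, α ≠ α' → B n α α' = 0) := by
  have hset : S n = {w n 1 0, w n 1 1} := Set.ext fun α => by
    rw [mem_S_iff n hn α, Set.mem_insert_iff, Set.mem_singleton_iff]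
  have hne : w n 1 0 ≠ w n 1 1 := by
    intro h
    have h' := congrFun h ⟨n - 1, bs n 1⟩
    rw [w_val n hn 1 0 0 ⟨n - 1, bs n 1⟩ (n - 1) rfl (Or.inr (Or.inr (Or.inl (by omega)))),
        w_val n hn 1 1 1 ⟨n - 1, bs n 1⟩ (n - 1) rfl (Or.inr (Or.inr (Or.inl (by omega))))] at h'
    exact one_ne_zero h'.symm
  refine ⟨?_, ?_, ?_, ?_⟩
  · rw [hset]
    exact (Set.finite_singleton _).insert _
  · rw [hset, Set.ncard_pair hne]
  · intro α hα
    rcases (mem_S_iff n hn α).mp hα with rfl | rfl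
    · have h := w_sigma n hn 1 0
      rwa [one_smul] at h
    · have h := w_sigma n hn 1 1
      rwa [one_smul] at h
  · intro α hα α' hα' hne'
    rcases (mem_S_iff n hn α).mp hα with rfl | rfl <;>
      rcases (mem_S_iff n hn α').mp hα' with rfl | rfl
    · exact absurd rfl hne'
    · rw [B_w n hn]; norm_num
    · rw [B_w n hn]; norm_num
    · exact absurd rfl hne'

end Stmt2
end

section
/- The set S = \{\alpha \in \Delta_0^+ : \alpha + \sigma(\alpha) \in \mathbb{Z}_{>0}\cdot\delta\} has exactly 3 elements; moreover every \alpha \in S satisfies \alpha + \sigma(\alpha) = \delta, and B(\alpha, \alpha') = 0 for all distinct \alpha, \alpha' \in S. In particular, S is the positive system of a subsystem of \Delta_0 of type 3A_1. -/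
/-!
Statement 3: For the affine root system of type `E_7^{(1)}` with the admissible
diagram automorphism `σ : α_i ↦ α_{6-i}` (`0 ≤ i ≤ 6`), `σ(α_7) = α_7`, the set
`S = {α ∈ Δ₀⁺ : α + σ(α) ∈ ℤ_{>0}·δ}` has exactly `3` elements, every `α ∈ S`
satisfies `α + σ(α) = δ`, and distinct elements of `S` are orthogonal (type `3A₁`).
-/

namespace Stmt3

/-- The root lattice `Q = ⨁_{i ∈ I} ℤ α_i` for `I = {0,1,…,7}`. -/
abbrev Q := Fin 8 → ℤ

/-- The edges of the Dynkin diagram of affine type `E_7^{(1)}`: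
`{i,i+1}` for `0 ≤ i ≤ 5`, and `{3,7}`. -/
abbrev edge (i j : ℕ) : Prop :=
  (i + 1 = j ∧ j ≤ 6) ∨ (j + 1 = i ∧ i ≤ 6) ∨ (i = 3 ∧ j = 7) ∨ (i = 7 ∧ j = 3)

/-- The generalized Cartan matrix of type `E_7^{(1)}`. -/
def CM (i j : Fin 8) : ℤ :=
  if i = j then 2 else if edge (i : ℕ) (j : ℕ) then -1 else 0

/-- The symmetric bilinear form `B` on `Q` determined by the Cartan matrix. -/
def B (v w : Q) : ℤ := ∑ i, ∑ j, v i * CM i j * w j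

/-- The set of positive real roots. -/
def ΔrePos : Set Q := {v | (∀ i, 0 ≤ v i) ∧ B v v = 2}

/-- The set `Δ₀⁺` of positive roots of the finite root system of type `E_7`. -/
def Δ0Pos : Set Q := {v | v ∈ ΔrePos ∧ v 0 = 0}

/-- The primitive null root
`δ = α_0 + 2α_1 + 3α_2 + 4α_3 + 3α_4 + 2α_5 + α_6 + 2α_7`. -/
def δ : Q := ![1, 2, 3, 4, 3, 2, 1, 2]

/-- The involution of the index set: `i ↦ 6-i` for `0 ≤ i ≤ 6`, `7 ↦ 7`. -/
def τ (i : Fin 8) : Fin 8 :=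
  ⟨if (i : ℕ) = 7 then 7 else 6 - (i : ℕ), by have := i.isLt; split_ifs <;> omega⟩

/-- The admissible diagram automorphism `σ : α_i ↦ α_{6-i}` (`i ≤ 6`),
`α_7 ↦ α_7` (on coordinates). -/
def σmap (v : Q) : Q := fun i => v (τ i)

/-- `S = {α ∈ Δ₀⁺ : α + σ(α) ∈ ℤ_{>0}·δ}`. -/
def S : Set Q := {α | α ∈ Δ0Pos ∧ ∃ m : ℤ, 0 < m ∧ α + σmap α = m • δ}

/-- Explicit expansion of the bilinear form `B`. -/
lemma B_expand (v w : Q) : B v w =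
 2*(v 0*w 0 + v 1*w 1 + v 2*w 2 + v 3*w 3 + v 4*w 4 + v 5*w 5 + v 6*w 6 + v 7*w 7)
 - (v 0*w 1 + v 1*w 0 + v 1*w 2 + v 2*w 1 + v 2*w 3 + v 3*w 2 + v 3*w 4 + v 4*w 3
   + v 4*w 5 + v 5*w 4 + v 5*w 6 + v 6*w 5 + v 3*w 7 + v 7*w 3) := by
  simp only [B, Fin.sum_univ_eight]
  simp (config := { decide := true }) only [CM, if_true, if_false]
  ring

/-- The three elements of `S`. -/
def v1 : Q := ![0,0,1,2,2,2,1,1]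
def v2 : Q := ![0,1,1,2,2,1,1,1]
def v3 : Q := ![0,1,2,2,1,1,1,1]

lemma v1_mem : v1 ∈ S :=
  ⟨⟨⟨by decide, by decide⟩, rfl⟩, 1, one_pos, by decide⟩

lemma v2_mem : v2 ∈ S :=
  ⟨⟨⟨by decide, by decide⟩, rfl⟩, 1, one_pos, by decide⟩

lemma v3_mem : v3 ∈ S :=
  ⟨⟨⟨by decide, by decide⟩, rfl⟩, 1, one_pos, by decide⟩

lemma S_eq : S = {v1, v2, v3} := by
  apply Set.eq_of_subset_of_subset
  · rintro α ⟨⟨⟨hpos, hB⟩, h0⟩, m, hm, heq⟩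
    have e : ∀ i : Fin 8, α i + σmap α i = m * δ i := fun i => by
      have := congrFun heq i
      simpa using this
    have e0 : α 0 + α 6 = m * 1 := by simpa [σmap, τ, δ] using e 0
    have e1 : α 1 + α 5 = m * 2 := by simpa [σmap, τ, δ] using e 1
    have e2 : α 2 + α 4 = m * 3 := by simpa [σmap, τ, δ] using e 2
    have e3 : α 3 + α 3 = m * 4 := by simpa [σmap, τ, δ] using e 3
    have e7 : α 7 + α 7 = m * 2 := by simpa [σmap, τ, δ] using e 7
    have c3 : α 3 = 2 * m := by omega
    have c6 : α 6 = m := by omega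
    have c7 : α 7 = m := by omega
    have c4 : α 4 = 3 * m - α 2 := by omega
    have c5 : α 5 = 2 * m - α 1 := by omega
    rw [B_expand] at hB
    rw [h0, c3, c4, c5, c6, c7] at hB
    have hm1 : m = 1 := by
      by_contra hne
      have hm2 : 2 ≤ m := by omega
      nlinarith [sq_nonneg (2 * α 1 - α 2), sq_nonneg (3 * α 2 - 4 * m), hB, hm2,
        mul_le_mul_of_nonneg_left hm2 (by omega : (0:ℤ) ≤ m)]
    subst hm1
    have hv : α = ![α 0, α 1, α 2, α 3, α 4, α 5, α 6, α 7] := by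
      funext i; fin_cases i <;> rfl
    have ha1 : 0 ≤ α 1 := hpos 1
    have ha2 : 0 ≤ α 2 := hpos 2
    have ha5 : 0 ≤ α 5 := hpos 5
    have ha4 : 0 ≤ α 4 := hpos 4
    obtain ⟨a, ha⟩ : ∃ x, α 1 = x := ⟨_, rfl⟩
    obtain ⟨b, hb⟩ : ∃ x, α 2 = x := ⟨_, rfl⟩
    have hab : (a = 0 ∧ b = 1) ∨ (a = 1 ∧ b = 1) ∨ (a = 1 ∧ b = 2) := by
      rw [ha] at c5 e1 ha1
      rw [hb] at c4 e2 ha2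
      have hau : a ≤ 2 := by omega
      have hbu : b ≤ 3 := by omega
      rw [ha, hb] at hB
      interval_cases a <;> interval_cases b <;> omega
    simp only [Set.mem_insert_iff, Set.mem_singleton_iff]
    rcases hab with ⟨ra, rb⟩ | ⟨ra, rb⟩ | ⟨ra, rb⟩
    · refine Or.inl ?_
      have d1 : α 1 = 0 := by omega
      have d2 : α 2 = 1 := by omega
      have d3 : α 3 = 2 := by omega
      have d4 : α 4 = 2 := by omega
      have d5 : α 5 = 2 := by omega
      have d6 : α 6 = 1 := by omega
      have d7 : α 7 = 1 := by omega
      rw [hv, h0, d1, d2, d3, d4, d5, d6, d7]; rfl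
    · refine Or.inr (Or.inl ?_)
      have d1 : α 1 = 1 := by omega
      have d2 : α 2 = 1 := by omega
      have d3 : α 3 = 2 := by omega
      have d4 : α 4 = 2 := by omega
      have d5 : α 5 = 1 := by omega
      have d6 : α 6 = 1 := by omega
      have d7 : α 7 = 1 := by omega
      rw [hv, h0, d1, d2, d3, d4, d5, d6, d7]; rfl
    · refine Or.inr (Or.inr ?_)
      have d1 : α 1 = 1 := by omega
      have d2 : α 2 = 2 := by omega
      have d3 : α 3 = 2 := by omega
      have d4 : α 4 = 1 := by omega
      have d5 : α 5 = 1 := by omega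
      have d6 : α 6 = 1 := by omega
      have d7 : α 7 = 1 := by omega
      rw [hv, h0, d1, d2, d3, d4, d5, d6, d7]; rfl
  · rintro α (rfl | rfl | rfl)
    exacts [v1_mem, v2_mem, v3_mem]

theorem statement3 :
    S.Finite ∧ S.ncard = 3 ∧
    (∀ α ∈ S, α + σmap α = δ) ∧
    (∀ α ∈ S, ∀ α' ∈ S, α ≠ α' → B α α' = 0) := by
  rw [S_eq]
  refine ⟨(Set.finite_singleton v3).insert v2 |>.insert v1, ?_, ?_, ?_⟩
  · rw [Set.ncard_eq_three]
    exact ⟨v1, v2, v3, by decide, by decide, by decide, rfl⟩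
  · rintro α (rfl | rfl | rfl) <;> decide
  · rintro α (rfl | rfl | rfl) α' (rfl | rfl | rfl) hne <;>
      first | (exact absurd rfl hne) | decide

end Stmt3
end

section
/- The set S = \{\alpha \in \Delta_0^+ : \alpha + \sigma(\alpha) + \sigma^2(\alpha) \in \mathbb{Z}_{>0}\cdot\delta\} has exactly 6 elements and admits a partition S = X_1 \sqcup X_2 with the following properties: (a) B(x,y) = 0 for all x \in X_1 and y \in X_2; (b) each X_i is of the form \{\beta, \beta', \beta + \beta'\} for two roots \beta, \beta' \in \Delta_0^+ with B(\beta,\beta') = -1; (c) each of the four roots \beta, \beta' occurring in (b) satisfies \beta + \sigma(\beta) + \sigma^2(\beta) = \delta, while each of the two roots \beta + \beta' satisfies (\beta+\beta') + \sigma(\beta+\beta') + \sigma^2(\beta+\beta') = 2\delta. In particular, S is the positive system of a subsystem of \Delta_0 of type 2A_2. -/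
/-!
Statement 4: For the affine root system of type `E_6^{(1)}` with the admissible
order-3 diagram automorphism `σ` (`α_0 → α_5 → α_1 → α_0`, `α_6 → α_4 → α_2 → α_6`,
`α_3 → α_3`), the set `S = {α ∈ Δ₀⁺ : α + σ(α) + σ²(α) ∈ ℤ_{>0}·δ}` has exactly
`6` elements and splits as `S = X₁ ⊔ X₂` with: (a) `B(x,y) = 0` for `x ∈ X₁`,
`y ∈ X₂`; (b) each `Xᵢ = {β, β', β+β'}` with `B(β,β') = -1`; (c) each of the four
roots `β, β'` has orbit sum `δ`, and each root `β+β'` has orbit sum `2δ`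
(type `2A₂`).
-/

namespace Stmt4

/-- The root lattice `Q = ⨁_{i ∈ I} ℤ α_i` for `I = {0,1,…,6}`. -/
abbrev Q := Fin 7 → ℤ

/-- The edges of the Dynkin diagram of affine type `E_6^{(1)}`:
`{1,2}`, `{2,3}`, `{3,4}`, `{4,5}`, `{3,6}`, `{0,6}`. -/
abbrev epair (i j : ℕ) : Prop :=
  (i = 1 ∧ j = 2) ∨ (i = 2 ∧ j = 3) ∨ (i = 3 ∧ j = 4) ∨ (i = 4 ∧ j = 5) ∨
  (i = 3 ∧ j = 6) ∨ (i = 0 ∧ j = 6)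

abbrev edge (i j : ℕ) : Prop := epair i j ∨ epair j i

/-- The generalized Cartan matrix of type `E_6^{(1)}`. -/
def CM (i j : Fin 7) : ℤ :=
  if i = j then 2 else if edge (i : ℕ) (j : ℕ) then -1 else 0

/-- The symmetric bilinear form `B` on `Q` determined by the Cartan matrix. -/
def B (v w : Q) : ℤ := ∑ i, ∑ j, v i * CM i j * w j

/-- The set of positive real roots. -/
def ΔrePos : Set Q := {v | (∀ i, 0 ≤ v i) ∧ B v v = 2}

/-- The set `Δ₀⁺` of positive roots of the finite root system of type `E_6`. -/
def Δ0Pos : Set Q := {v | v ∈ ΔrePos ∧ v 0 = 0}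

/-- The primitive null root
`δ = α_0 + α_1 + 2α_2 + 3α_3 + 2α_4 + α_5 + 2α_6`. -/
def δ : Q := ![1, 1, 2, 3, 2, 1, 2]

/-- The admissible order-3 diagram automorphism `σ`
(`α_0 → α_5 → α_1 → α_0`, `α_6 → α_4 → α_2 → α_6`, `α_3 → α_3`), given on
coordinates by `(σ v)_j = v_{p⁻¹(j)}`. -/
def σmap (v : Q) : Q := fun j => v (![1, 5, 4, 3, 6, 0, 2] j)

/-- The orbit sum `α + σ(α) + σ²(α)`. -/
def Osum (α : Q) : Q := α + σmap α + σmap (σmap α)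

/-- `S = {α ∈ Δ₀⁺ : α + σ(α) + σ²(α) ∈ ℤ_{>0}·δ}`. -/
def S : Set Q := {α | α ∈ Δ0Pos ∧ ∃ m : ℤ, 0 < m ∧ Osum α = m • δ}


def s1 : Q := ![0,0,0,1,1,1,1]
def s2 : Q := ![0,0,1,1,1,1,0]
def s3 : Q := ![0,1,1,1,0,0,1]
def s4 : Q := ![0,1,1,1,1,0,0]
def s5 : Q := ![0,1,1,2,2,1,1]
def s6 : Q := ![0,1,2,2,1,1,1]

lemma B_eval (v w : Q) : B v w =
    v 0 * (2*w 0 - w 6) + v 1 * (2*w 1 - w 2) + v 2 * (-w 1 + 2*w 2 - w 3) +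
    v 3 * (-w 2 + 2*w 3 - w 4 - w 6) + v 4 * (-w 3 + 2*w 4 - w 5) +
    v 5 * (-w 4 + 2*w 5) + v 6 * (-w 0 - w 3 + 2*w 6) := by
  simp only [B, Fin.sum_univ_seven, CM]
  norm_num [edge, epair, Fin.ext_iff,
    show ((0:Fin 7):ℕ) = 0 from rfl, show ((1:Fin 7):ℕ) = 1 from rfl,
    show ((2:Fin 7):ℕ) = 2 from rfl, show ((3:Fin 7):ℕ) = 3 from rfl,
    show ((4:Fin 7):ℕ) = 4 from rfl, show ((5:Fin 7):ℕ) = 5 from rfl,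
    show ((6:Fin 7):ℕ) = 6 from rfl]
  ring

lemma S_sub : ∀ v ∈ S, v = s1 ∨ v = s2 ∨ v = s3 ∨ v = s4 ∨ v = s5 ∨ v = s6 := by
  rintro v ⟨⟨⟨hnn, hB⟩, h0⟩, m, hm, ho⟩
  have e0 : v 0 + v 1 + v 5 = m := by
    have := congrFun ho 0
    simpa [Osum, σmap, δ, Pi.add_apply, Pi.smul_apply, smul_eq_mul] using this
  have e2 : v 2 + v 4 + v 6 = 2 * m := by
    have := congrFun ho 2
    simp [Osum, σmap, δ, Pi.add_apply, Pi.smul_apply, smul_eq_mul] at this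
    linarith
  have e3 : v 3 = m := by
    have := congrFun ho 3
    simp [Osum, σmap, δ, Pi.add_apply, Pi.smul_apply, smul_eq_mul] at this
    linarith
  rw [B_eval] at hB
  have n1 := hnn 1; have n2 := hnn 2; have n4 := hnn 4; have n5 := hnn 5; have n6 := hnn 6
  set a := v 1 with ha'
  set b := v 2 with hb'
  set c := v 4 with hc'
  have h5 : v 5 = m - a := by omega
  have h6 : v 6 = 2*m - b - c := by omega
  have hq : 4*a^2 + 4*b^2 + 4*c^2 + 8*m^2 + 4*b*c - 2*a*b + 2*a*c - 4*a*m - 8*b*m - 10*c*m = 2 := by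
    rw [h0, e3, h5, h6] at hB
    linear_combination hB
  have hm2 : m ≤ 2 := by
    nlinarith [sq_nonneg (4*a - b + c - 2*m), sq_nonneg (5*b + 3*c - 6*m), sq_nonneg (4*c - 3*m), hm]
  have hab : a ≤ m := by omega
  have hbb : b ≤ 2*m := by omega
  have hcb : c ≤ 2*m := by omega
  have hv : v = ![0, a, b, m, c, m - a, 2*m - b - c] := by
    funext i; fin_cases i <;> simp [h0, e3, h5, h6] <;> rfl
  interval_cases m <;> interval_cases a <;> interval_cases b <;> interval_cases c <;>
    first
      | omega
      | (simp only [hv, s1, s2, s3, s4, s5, s6]; norm_num)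

lemma S_eq : S = {s1, s2, s3, s4, s5, s6} := by
  ext v
  constructor
  · intro h
    simpa [Set.mem_insert_iff] using S_sub v h
  · intro h
    simp only [Set.mem_insert_iff, Set.mem_singleton_iff] at h
    rcases h with rfl | rfl | rfl | rfl | rfl | rfl
    · exact ⟨⟨⟨by decide, by decide⟩, rfl⟩, 1, one_pos, by decide⟩
    · exact ⟨⟨⟨by decide, by decide⟩, rfl⟩, 1, one_pos, by decide⟩
    · exact ⟨⟨⟨by decide, by decide⟩, rfl⟩, 1, one_pos, by decide⟩
    · exact ⟨⟨⟨by decide, by decide⟩, rfl⟩, 1, one_pos, by decide⟩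
    · exact ⟨⟨⟨by decide, by decide⟩, rfl⟩, 2, by norm_num, by decide⟩
    · exact ⟨⟨⟨by decide, by decide⟩, rfl⟩, 2, by norm_num, by decide⟩

theorem statement4 :
    S.Finite ∧ S.ncard = 6 ∧
    ∃ X₁ X₂ : Set Q, X₁ ∪ X₂ = S ∧ Disjoint X₁ X₂ ∧
      (∀ x ∈ X₁, ∀ y ∈ X₂, B x y = 0) ∧
      (∀ X ∈ ({X₁, X₂} : Set (Set Q)), ∃ β β' : Q,
        β ∈ Δ0Pos ∧ β' ∈ Δ0Pos ∧ B β β' = -1 ∧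
        X = {β, β', β + β'} ∧
        Osum β = δ ∧ Osum β' = δ ∧ Osum (β + β') = 2 • δ) := by
  have hS := S_eq
  have hfin : S.Finite := by
    rw [hS]
    exact (((((Set.finite_singleton s6).insert s5).insert s4).insert s3).insert s2).insert s1
  refine ⟨hfin, ?_, {s1, s4, s5}, {s2, s3, s6}, ?_, ?_, ?_, ?_⟩
  · have : S = (↑({s1, s2, s3, s4, s5, s6} : Finset Q) : Set Q) := by
      rw [hS]; simp
    rw [this, Set.ncard_coe_finset]
    decide
  · rw [hS]
    ext v
    simp only [Set.mem_union, Set.mem_insert_iff, Set.mem_singleton_iff]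
    tauto
  · refine Set.disjoint_left.mpr ?_
    intro x hx hy
    simp only [Set.mem_insert_iff, Set.mem_singleton_iff] at hx hy
    rcases hx with rfl | rfl | rfl <;> revert hy <;> decide
  · intro x hx y hy
    simp only [Set.mem_insert_iff, Set.mem_singleton_iff] at hx hy
    rcases hx with rfl | rfl | rfl <;> rcases hy with rfl | rfl | rfl <;> decide
  · intro X hX
    simp only [Set.mem_insert_iff, Set.mem_singleton_iff] at hX
    rcases hX with rfl | rfl
    · refine ⟨s1, s4, ⟨⟨by decide, by decide⟩, rfl⟩, ⟨⟨by decide, by decide⟩, rfl⟩,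
        by decide, ?_, by decide, by decide, ?_⟩
      · rw [show s1 + s4 = s5 from by decide]
      · rw [show s1 + s4 = s5 from by decide]; decide
    · refine ⟨s2, s3, ⟨⟨by decide, by decide⟩, rfl⟩, ⟨⟨by decide, by decide⟩, rfl⟩,
        by decide, ?_, by decide, by decide, ?_⟩
      · rw [show s2 + s3 = s6 from by decide]
      · rw [show s2 + s3 = s6 from by decide]; decide


end Stmt4
end
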